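/- Let α, β ∈ K with O_K·α + 𝔞·β = 𝔟 ≠ 0. Then there exist α*, β* ∈ K with αβ* − βα* = 1 (so that the matrix (α α*; β β*) lies in SL(2,K)) and O_K·β* + 𝔞^{-1}·α* = 𝔟^{-1}. -/

import Mathlib

open NumberField FractionalIdeal

theorem span_singleton_neg' (K : Type*) [Field K] [NumberField K] (c : K) :
    spanSingleton (nonZeroDivisors (𝓞 K)) (-c) = spanSingleton (nonZeroDivisors (𝓞 K)) c := by
  apply le_antisymm <;> rw [spanSingleton_le_iff_mem, mem_spanSingleton]
  · exact ⟨-1, by simp⟩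
  · exact ⟨-1, by simp⟩

/-- If `α, β ∈ K` satisfy `𝓞_K·α + 𝔞·β = 𝔟 ≠ 0`, then there exist `α*, β* ∈ K` with
`αβ* − βα* = 1` (so that `(α α*; β β*) ∈ SL(2,K)`) and `𝓞_K·β* + 𝔞⁻¹·α* = 𝔟⁻¹`. -/
theorem exists_sl2_completion (K : Type*) [Field K] [NumberField K]
    (𝔞 𝔟 : FractionalIdeal (nonZeroDivisors (𝓞 K)) K) (ha : 𝔞 ≠ 0) (hb : 𝔟 ≠ 0)
    (α β : K)
    (h : spanSingleton (nonZeroDivisors (𝓞 K)) α +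
      𝔞 * spanSingleton (nonZeroDivisors (𝓞 K)) β = 𝔟) :
    ∃ αs βs : K, α * βs - β * αs = 1 ∧
      spanSingleton (nonZeroDivisors (𝓞 K)) βs +
        𝔞⁻¹ * spanSingleton (nonZeroDivisors (𝓞 K)) αs = 𝔟⁻¹ := by
  have hbinv : 𝔟 * 𝔟⁻¹ = 1 := mul_inv_cancel₀ hb
  have hainv : 𝔞 * 𝔞⁻¹ = 1 := mul_inv_cancel₀ ha
  have h1 : (1 : K) ∈ spanSingleton (nonZeroDivisors (𝓞 K)) α * 𝔟⁻¹ +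
      𝔞 * spanSingleton (nonZeroDivisors (𝓞 K)) β * 𝔟⁻¹ := by
    rw [← add_mul, h, hbinv]
    exact one_mem_one _
  obtain ⟨x, hx, y, hy, hxy⟩ := (FractionalIdeal.mem_add _ _ _).mp h1
  obtain ⟨b, hbmem, hxb⟩ := mem_singleton_mul.mp hx
  have hy' : y ∈ spanSingleton (nonZeroDivisors (𝓞 K)) β * (𝔞 * 𝔟⁻¹) := by
    rwa [show spanSingleton (nonZeroDivisors (𝓞 K)) β * (𝔞 * 𝔟⁻¹)
      = 𝔞 * spanSingleton (nonZeroDivisors (𝓞 K)) β * 𝔟⁻¹ by ring]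
  obtain ⟨c, hcmem, hyc⟩ := mem_singleton_mul.mp hy'
  refine ⟨-c, b, by rw [mul_neg, sub_neg_eq_add, ← hxb, ← hyc, hxy], ?_⟩
  rw [span_singleton_neg']
  set 𝔠 : FractionalIdeal (nonZeroDivisors (𝓞 K)) K :=
    spanSingleton (nonZeroDivisors (𝓞 K)) b + 𝔞⁻¹ * spanSingleton (nonZeroDivisors (𝓞 K)) c
    with h𝔠
  have hαle : spanSingleton (nonZeroDivisors (𝓞 K)) α ≤ 𝔟 := by rw [← h]; exact le_sup_left
  have hβle : 𝔞 * spanSingleton (nonZeroDivisors (𝓞 K)) β ≤ 𝔟 := by rw [← h]; exact le_sup_right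
  have hcle : 𝔠 ≤ 𝔟⁻¹ := by
    apply sup_le
    · exact spanSingleton_le_iff_mem.mpr hbmem
    · calc 𝔞⁻¹ * spanSingleton (nonZeroDivisors (𝓞 K)) c ≤ 𝔞⁻¹ * (𝔞 * 𝔟⁻¹) :=
            mul_right_mono (a := 𝔞⁻¹) (spanSingleton_le_iff_mem.mpr hcmem)
        _ = 𝔟⁻¹ := by rw [← mul_assoc, mul_comm 𝔞⁻¹ 𝔞, hainv, one_mul]
  have hmul : 𝔠 * 𝔟 = 1 := by
    apply le_antisymm
    · calc 𝔠 * 𝔟 ≤ 𝔟⁻¹ * 𝔟 := mul_left_mono (a := 𝔟) hcle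
        _ = 1 := by rw [mul_comm, hbinv]
    · rw [FractionalIdeal.one_le, ← hxy, hxb, hyc, mul_comm α b, ← mem_coe]
      apply Submodule.add_mem
      · exact mem_coe.mpr <| mul_mem_mul
          ((le_sup_left : _ ≤ 𝔠) (mem_spanSingleton_self _ b))
          (hαle (mem_spanSingleton_self _ α))
      · have hβc : β * c ∈ (𝔞⁻¹ * spanSingleton (nonZeroDivisors (𝓞 K)) c) *
            (𝔞 * spanSingleton (nonZeroDivisors (𝓞 K)) β) := by
          have heq : (𝔞⁻¹ * spanSingleton (nonZeroDivisors (𝓞 K)) c) *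
              (𝔞 * spanSingleton (nonZeroDivisors (𝓞 K)) β)
              = spanSingleton (nonZeroDivisors (𝓞 K)) c *
                spanSingleton (nonZeroDivisors (𝓞 K)) β := by
            rw [show 𝔞⁻¹ * spanSingleton (nonZeroDivisors (𝓞 K)) c *
              (𝔞 * spanSingleton (nonZeroDivisors (𝓞 K)) β)
              = (𝔞 * 𝔞⁻¹) * (spanSingleton (nonZeroDivisors (𝓞 K)) c *
                spanSingleton (nonZeroDivisors (𝓞 K)) β) by ring, hainv, one_mul]
          rw [heq, spanSingleton_mul_spanSingleton, mul_comm]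
          exact mem_spanSingleton_self _ _
        have hle : (𝔞⁻¹ * spanSingleton (nonZeroDivisors (𝓞 K)) c) *
            (𝔞 * spanSingleton (nonZeroDivisors (𝓞 K)) β) ≤ 𝔠 * 𝔟 :=
          le_trans (mul_left_mono (le_sup_right : _ ≤ 𝔠))
            (mul_right_mono (a := 𝔠) hβle)
        exact mem_coe.mpr <| hle hβc
  calc 𝔠 = 𝔠 * (𝔟 * 𝔟⁻¹) := by rw [hbinv, mul_one]
    _ = (𝔠 * 𝔟) * 𝔟⁻¹ := by rw [mul_assoc]
    _ = 𝔟⁻¹ := by rw [hmul, one_mul]
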